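/- arXiv:1810.03027 — 13 statements merged into one kernel-verified Lean document; each statement's English description precedes it below -/
import Mathlib

section
/- Let B = (X, ⊳, ⊲) be a biquandle. Then the underlying quandle operation x * y = β_y^{-1}(x ⊳ y), where β_y(x) = x ⊲ y, makes X a quandle: x * x = x for all x ∈ X, for each y ∈ X the map x ↦ x * y is a bijection of X, and (x * y) * z = (x * z) * (y * z) for all x, y, z ∈ X. -/
/-- A quandle structure on a type, given by its binary operation. -/
structure IsQuandle {Q : Type*} (op : Q → Q → Q) : Prop where
  idem : ∀ x, op x x = x
  right_bij : ∀ y, Function.Bijective (fun x => op x y)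
  self_distrib : ∀ x y z, op (op x y) z = op (op x z) (op y z)

/-- A biquandle structure on a type, given by its two binary operations
`ub` (`x ⊳ y`) and `ob` (`x ⊲ y`). -/
structure IsBiquandle {B : Type*} (ub ob : B → B → B) : Prop where
  diag : ∀ x, ub x x = ob x x
  alpha_bij : ∀ y, Function.Bijective (fun x => ub x y)
  beta_bij : ∀ y, Function.Bijective (fun x => ob x y)
  S_bij : Function.Bijective (fun p : B × B => (ob p.2 p.1, ub p.1 p.2))
  exchange₁ : ∀ x y z, ub (ub x y) (ub z y) = ub (ub x z) (ob y z)
  exchange₂ : ∀ x y z, ob (ub x y) (ub z y) = ub (ob x z) (ob y z)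
  exchange₃ : ∀ x y z, ob (ob x y) (ob z y) = ob (ob x z) (ub y z)

/-- If `(X, ⊳, ⊲)` is a biquandle and `*` is the operation determined by
`β_y(x * y) = x ⊳ y` (i.e. `x * y = β_y⁻¹(x ⊳ y)`, where `β_y(x) = x ⊲ y`),
then `(X, *)` is a quandle. -/
theorem underlying_quandle_isQuandle {X : Type*} (ub ob : X → X → X)
    (hB : IsBiquandle ub ob) (star : X → X → X)
    (hstar : ∀ x y, ob (star x y) y = ub x y) :
    IsQuandle star := by
  have binj : ∀ y, Function.Injective (fun x => ob x y) := fun y => (hB.beta_bij y).1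
  constructor
  · intro x
    apply binj x
    simp only
    rw [hstar, hB.diag]
  · intro y
    constructor
    · intro a b h
      have : ob (star a y) y = ob (star b y) y := by simp only at h; rw [h]
      rw [hstar, hstar] at this
      exact (hB.alpha_bij y).1 this
    · intro z
      obtain ⟨x, hx⟩ := (hB.alpha_bij y).2 (ob z y)
      refine ⟨x, ?_⟩
      apply binj y
      simp only at hx ⊢
      rw [hstar, hx]
    -- self-distributivity
  · intro x y z
    set a := star x y with ha
    set b := star y z with hb
    set c := star x z with hc
    set u := star a z with hu
    -- goal : star a z = star c b, i.e. u = star c b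
    apply binj b
    show ob u b = ob (star c b) b
    rw [hstar]
    -- suffices: ob u b = ub c b
    apply binj (ub z b)
    show ob (ob u b) (ub z b) = ob (ub c b) (ub z b)
    have h1 : ob (ub c b) (ub z b) = ub (ob c z) (ob b z) := hB.exchange₂ c b z
    have h2 : ub (ub x z) (ub y z) = ub (ub x y) (ob z y) := hB.exchange₁ x z y
    have h3 : ub (ob a y) (ob z y) = ob (ub a z) (ub y z) := (hB.exchange₂ a z y).symm
    have h4 : ob (ob u z) (ob b z) = ob (ob u b) (ub z b) := hB.exchange₃ u z b
    rw [h1, hstar, hstar, h2, ← hstar x y, h3, ← hstar y z, ← hstar a z, h4]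
end

section
/- Let {β_y : y ∈ X} be a biquandle structure on a quandle Q = (X, *). Define x ⊳ y = β_y(x * y) and x ⊲ y = β_y(x) for all x, y ∈ X. Then (X, ⊳, ⊲) is a biquandle, and its underlying quandle operation coincides with *, i.e. β_y^{-1}(x ⊳ y) = x * y for all x, y ∈ X. -/
/-- A biquandle structure on the quandle `(X, op)`: a family `β` of quandle
automorphisms such that `β_{β_y(x*y)} ∘ β_y = β_{β_x(y)} ∘ β_x` and
`y ↦ β_y(y)` is a bijection. -/
structure IsBiquandleStructure {X : Type*} (op : X → X → X) (β : X → X → X) : Prop where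
  beta_bij : ∀ y, Function.Bijective (β y)
  beta_hom : ∀ y x z, β y (op x z) = op (β y x) (β y z)
  compat : ∀ x y a, β (β y (op x y)) (β y a) = β (β x y) (β x a)
  diag_bij : Function.Bijective (fun y => β y y)

/-- Given a biquandle structure `β` on a quandle `(X, *)`, the operations
`x ⊳ y = β_y(x * y)` and `x ⊲ y = β_y(x)` make `X` a biquandle, and its
underlying quandle operation coincides with `*`, i.e.
`β_y⁻¹(x ⊳ y) = x * y` for all `x, y`. -/
theorem biquandle_of_biquandleStructure {X : Type*} (op : X → X → X) (β : X → X → X)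
    (hQ : IsQuandle op) (hβ : IsBiquandleStructure op β) :
    IsBiquandle (fun x y => β y (op x y)) (fun x y => β y x) ∧
    ∀ star : X → X → X, (∀ x y, β y (star x y) = β y (op x y)) → star = op := by
  obtain ⟨idem, rbij, sd⟩ := hQ
  obtain ⟨bbij, bhom, compat, dbij⟩ := hβ
  constructor
  · refine ⟨?_, ?_, ?_, ?_, ?_, ?_, ?_⟩
    · intro x
      simp only [idem]
    · intro y
      exact (bbij y).comp (rbij y)
    · intro y
      exact bbij y
    · constructor
      · rintro ⟨x, y⟩ ⟨x', y'⟩ h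
        simp only [Prod.mk.injEq] at h
        obtain ⟨h1, h2⟩ := h
        -- From compat at a = y resp. y', deduce β y y = β y' y', hence y = y'.
        have e1 := compat x y y
        have e2 := compat x' y' y'
        rw [h1, h2] at e1
        have hyy : β y y = β y' y' := (bbij (β y' (op x' y'))).1 (e1.trans e2.symm)
        have hy : y = y' := dbij.1 hyy
        subst hy
        have hx : op x y = op x' y := (bbij y).1 h2
        have : x = x' := (rbij y).1 hx
        simp [this]
      · rintro ⟨u, v⟩
        obtain ⟨d, hd⟩ := (bbij v).2 (β u u)
        obtain ⟨y, hy⟩ := dbij.2 d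
        simp only at hy
        obtain ⟨w, hw⟩ := (bbij y).2 v
        obtain ⟨x, hx⟩ := (rbij y).2 w
        simp only at hx
        refine ⟨⟨x, y⟩, ?_⟩
        have hv : β y (op x y) = v := by rw [hx, hw]
        have e := compat x y y
        rw [hv, hy, hd] at e
        have hu : β x y = u := dbij.1 e.symm
        simp [hu, hv]
    · intro x y z
      rw [← bhom, ← bhom, compat z y, ← sd x z y]
    · intro x y z
      rw [compat z y, bhom]
    · intro x y z
      rw [compat y z x]
  · intro star h
    funext x y
    exact (bbij y).1 (h x y)
end

section
/- Let G be a group. Then the operation a * b = b a^{-1} b makes G a quandle; the maps β_y(a) = y^{-2} a form a biquandle structure on (G, *); and the resulting operations x ⊳ y = y^{-1} x^{-1} y and x ⊲ y = y^{-2} x make G a biquandle (the Wada biquandle). -/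
/-- For a group `G`: the operation `a * b = b a⁻¹ b` makes `G` a quandle;
the maps `β_y(a) = y⁻² a` form a biquandle structure on it; the resulting
biquandle operations are `x ⊳ y = β_y(x * y) = y⁻¹ x⁻¹ y` and
`x ⊲ y = β_y(x) = y⁻² x`, and they make `G` a biquandle (the Wada
biquandle). -/
theorem wada_biquandle (G : Type*) [Group G] :
    IsQuandle (fun a b : G => b * a⁻¹ * b) ∧
    IsBiquandleStructure (fun a b : G => b * a⁻¹ * b) (fun y a => y⁻¹ * y⁻¹ * a) ∧
    (∀ x y : G, y⁻¹ * y⁻¹ * (y * x⁻¹ * y) = y⁻¹ * x⁻¹ * y) ∧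
    IsBiquandle (fun x y : G => y⁻¹ * x⁻¹ * y) (fun x y : G => y⁻¹ * y⁻¹ * x) := by
  refine ⟨⟨fun x => by group, fun y => ?_, fun x y z => by group⟩,
    ⟨fun y => ?_, fun y x z => by group, fun x y a => by group; simp [pow_two, zpow_two, mul_assoc], ?_⟩,
    fun x y => by group,
    ⟨fun x => by group, fun y => ?_, fun y => ?_, ?_,
     fun x y z => by group, fun x y z => by group; simp [pow_two, zpow_two, mul_assoc], fun x y z => by group; simp [pow_two, zpow_two, mul_assoc]⟩⟩
  · exact Function.bijective_iff_has_inverse.2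
      ⟨fun a => y * a⁻¹ * y, fun a => by group, fun a => by group⟩
  · exact Function.bijective_iff_has_inverse.2
      ⟨fun a => y * y * a, fun a => by group, fun a => by group⟩
  · exact Function.bijective_iff_has_inverse.2
      ⟨fun a => a⁻¹, fun a => by group, fun a => by group⟩
  · exact Function.bijective_iff_has_inverse.2
      ⟨fun a => y * a⁻¹ * y⁻¹, fun a => by group, fun a => by group⟩
  · exact Function.bijective_iff_has_inverse.2
      ⟨fun a => y * y * a, fun a => by group, fun a => by group⟩
  · exact Function.bijective_iff_has_inverse.2
      ⟨fun p => (p.1 * p.2⁻¹ * p.1⁻¹, p.1 * p.2⁻¹ * p.2⁻¹),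
       fun p => Prod.ext (by group) (by group), fun p => Prod.ext (by group) (by group)⟩
end

section
/- Let B = (X, ⊳, ⊲) be a biquandle with underlying quandle Q(B) = (X, *), and for y ∈ X let β_y(x) = x ⊲ y. Then the family {β_y : y ∈ X} is a biquandle structure on Q(B): each β_y is a quandle automorphism of (X, *), the identity β_{β_y(x*y)} ∘ β_y = β_{β_x(y)} ∘ β_x holds for all x, y ∈ X, and the map y ↦ β_y(y) is a bijection of X. Moreover x ⊳ y = β_y(x * y) for all x, y ∈ X. -/
/-- Let `(X, ⊳, ⊲)` be a biquandle with underlying quandle operation `star`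
(determined by `(x * y) ⊲ y = x ⊳ y`, i.e. `x * y = β_y⁻¹(x ⊳ y)` where
`β_y(x) = x ⊲ y`). Then the family `β_y` is a biquandle structure on the
underlying quandle, and moreover `x ⊳ y = β_y(x * y)` for all `x, y`. -/
theorem biquandleStructure_of_biquandle {X : Type*} (ub ob : X → X → X)
    (hB : IsBiquandle ub ob) (star : X → X → X)
    (hstar : ∀ x y, ob (star x y) y = ub x y) :
    IsBiquandleStructure star (fun y x => ob x y) ∧
    ∀ x y, ub x y = ob (star x y) y := by
  obtain ⟨diag, hα, hβ, hS, e1, e2, e3⟩ := hB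
  refine ⟨⟨fun y => hβ y, ?_, ?_, ?_, ?_⟩, fun x y => (hstar x y).symm⟩
  · -- beta_hom
    intro y x z
    apply (hβ (ob z y)).1
    show ob (ob (star x z) y) (ob z y) = ob (star (ob x y) (ob z y)) (ob z y)
    rw [hstar, e3, hstar]
    exact e2 x z y
  · -- compat
    intro x y a
    show ob (ob a y) (ob (star x y) y) = ob (ob a x) (ob y x)
    rw [hstar, ← e3]
  · -- diag injective
    intro y z h
    simp only at h
    have h2 : ub y y = ub z z := by rw [diag, diag]; exact h
    have : (fun p : X × X => (ob p.2 p.1, ub p.1 p.2)) (y, y)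
        = (fun p : X × X => (ob p.2 p.1, ub p.1 p.2)) (z, z) := by
      simp only [Prod.mk.injEq]; exact ⟨h, h2⟩
    have := hS.1 this
    exact congrArg Prod.fst this
  · -- diag surjective
    intro x
    obtain ⟨⟨a, b⟩, hab⟩ := hS.2 (x, x)
    simp only [Prod.mk.injEq] at hab
    obtain ⟨h1, h2⟩ := hab
    have key : ub x x = ub (ob a a) x := by
      have := e2 a b a
      rw [h2, h1, ← diag] at this
      exact this
    have hx : x = ob a a := (hα x).1 key
    have hba : b = a := (hβ a).1 (h1.trans hx)
    exact ⟨a, hx.symm⟩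
end

section
/- Let Q₁ = (X₁, *₁) and Q₂ = (X₂, *₂) be quandles, let {β¹_y : y ∈ X₁} be a biquandle structure on Q₁ and {β²_y : y ∈ X₂} a biquandle structure on Q₂, and let B₁, B₂ be the biquandles they define. Then B₁ and B₂ are isomorphic as biquandles if and only if there exists a quandle isomorphism F : Q₁ → Q₂ such that F ∘ β¹_y = β²_{F(y)} ∘ F for every y ∈ X₁. -/
/-- Let `B₁`, `B₂` be the biquandles defined by biquandle structures `β₁`, `β₂`
on quandles `(X₁, op₁)`, `(X₂, op₂)` — with operations
`x ⊳ᵢ y = βᵢ_y(x *ᵢ y)` and `x ⊲ᵢ y = βᵢ_y(x)`. Then `B₁ ≅ B₂` as biquandles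
iff there is a quandle isomorphism `F : Q₁ → Q₂` with
`F ∘ β¹_y = β²_{F(y)} ∘ F` for every `y`. -/
theorem biquandleStructure_iso_iff {X₁ X₂ : Type*}
    (op₁ : X₁ → X₁ → X₁) (op₂ : X₂ → X₂ → X₂) (β₁ : X₁ → X₁ → X₁) (β₂ : X₂ → X₂ → X₂)
    (hQ₁ : IsQuandle op₁) (hQ₂ : IsQuandle op₂)
    (hβ₁ : IsBiquandleStructure op₁ β₁) (hβ₂ : IsBiquandleStructure op₂ β₂) :
    (∃ F : X₁ → X₂, Function.Bijective F ∧
        (∀ x y, F (β₁ y (op₁ x y)) = β₂ (F y) (op₂ (F x) (F y))) ∧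
        (∀ x y, F (β₁ y x) = β₂ (F y) (F x))) ↔
    (∃ F : X₁ → X₂, Function.Bijective F ∧
        (∀ x y, F (op₁ x y) = op₂ (F x) (F y)) ∧
        (∀ y, F ∘ β₁ y = β₂ (F y) ∘ F)) := by
  constructor
  · rintro ⟨F, hF, h1, h2⟩
    refine ⟨F, hF, fun x y => (hβ₂.beta_bij (F y)).1 ?_, fun y => funext fun x => h2 x y⟩
    rw [← h2 (op₁ x y) y, h1 x y]
  · rintro ⟨F, hF, h1, h2⟩
    exact ⟨F, hF, fun x y => by
      have := congrFun (h2 y) (op₁ x y); simp only [Function.comp] at this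
      rw [this, h1], fun x y => congrFun (h2 y) x⟩
end

section
/- Let Q₁ = (X, *₁) and Q₂ = (Y, *₂) be quandles, let f be a quandle automorphism of Q₁ and g a quandle automorphism of Q₂, and let X_f and Y_g be the biquandles defined by the constant biquandle structures β_y = f (for all y ∈ X) and β_y = g (for all y ∈ Y). Then X_f and Y_g are isomorphic as biquandles if and only if there exists a quandle isomorphism F : Q₁ → Q₂ with F ∘ f = g ∘ F. -/
/-- Let `f`, `g` be quandle automorphisms of quandles `(X, op₁)`, `(Y, op₂)`,
and let `X_f`, `Y_g` be the biquandles defined by the constant biquandle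
structures `β_y = f` and `β_y = g` — with operations `x ⊳ y = f(x *₁ y)`,
`x ⊲ y = f(x)` on `X` and `x ⊳ y = g(x *₂ y)`, `x ⊲ y = g(x)` on `Y`.
Then `X_f ≅ Y_g` as biquandles iff there is a quandle isomorphism
`F : Q₁ → Q₂` with `F ∘ f = g ∘ F`. -/
theorem constant_structure_iso_iff {X Y : Type*}
    (op₁ : X → X → X) (op₂ : Y → Y → Y) (f : X → X) (g : Y → Y)
    (hQ₁ : IsQuandle op₁) (hQ₂ : IsQuandle op₂)
    (hf : Function.Bijective f ∧ ∀ x y, f (op₁ x y) = op₁ (f x) (f y))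
    (hg : Function.Bijective g ∧ ∀ x y, g (op₂ x y) = op₂ (g x) (g y)) :
    (∃ F : X → Y, Function.Bijective F ∧
        (∀ x y, F (f (op₁ x y)) = g (op₂ (F x) (F y))) ∧
        (∀ x, F (f x) = g (F x))) ↔
    (∃ F : X → Y, Function.Bijective F ∧
        (∀ x y, F (op₁ x y) = op₂ (F x) (F y)) ∧
        F ∘ f = g ∘ F) := by
  constructor
  · rintro ⟨F, hFb, h1, h2⟩
    refine ⟨F, hFb, fun x y => hg.1.injective ?_, funext h2⟩
    rw [← h2, h1]
  · rintro ⟨F, hFb, h1, h2⟩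
    refine ⟨F, hFb, fun x y => ?_, fun x => congrFun h2 x⟩
    have := congrFun h2 (op₁ x y); simp only [Function.comp] at this; rw [this, h1]
end

section
/- Let Q = (X, *) be a quandle and let f and g be quandle automorphisms of Q. Then the biquandles X_f and X_g defined by the constant biquandle structures f and g are isomorphic if and only if f and g are conjugate in the automorphism group Aut(Q); consequently the assignment f ↦ X_f induces a bijection between the conjugacy classes of Aut(Q) and the isomorphism classes of biquandles given by constant biquandle structures on Q. -/
/-- `f` is a quandle automorphism of `(Q, op)`. -/
def IsQuandleAut {Q : Type*} (op : Q → Q → Q) (f : Q → Q) : Prop :=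
  Function.Bijective f ∧ ∀ x y, f (op x y) = op (f x) (f y)

/-- `f` and `g` are conjugate in the automorphism group `Aut(Q)`:
there is an automorphism `h` with `h ∘ f = g ∘ h` (i.e. `h f h⁻¹ = g`). -/
def ConjugateAut {Q : Type*} (op : Q → Q → Q) (f g : Q → Q) : Prop :=
  ∃ h : Q → Q, IsQuandleAut op h ∧ h ∘ f = g ∘ h

/-- The biquandles `X_f` and `X_g` (with operations `x ⊳ y = f (x * y)`,
`x ⊲ y = f x`, resp. for `g`) are isomorphic. -/
def ConstBiquandleIso {Q : Type*} (op : Q → Q → Q) (f g : Q → Q) : Prop :=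
  ∃ F : Q → Q, Function.Bijective F ∧
    (∀ x y, F (f (op x y)) = g (op (F x) (F y))) ∧ (∀ x, F (f x) = g (F x))

/-- For quandle automorphisms `f`, `g` of a quandle `Q = (X, *)`, the
biquandles `X_f` and `X_g` defined by the constant biquandle structures are
isomorphic iff `f` and `g` are conjugate in `Aut(Q)`; consequently
`f ↦ X_f` induces a bijection between the conjugacy classes of `Aut(Q)` and
the isomorphism classes of biquandles given by constant biquandle structures
on `Q`. -/
theorem constant_structures_conjugacy {Q : Type*} (op : Q → Q → Q) (hQ : IsQuandle op) :
    (∀ f g : {f : Q → Q // IsQuandleAut op f},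
        ConstBiquandleIso op f.1 g.1 ↔ ConjugateAut op f.1 g.1) ∧
    ∃ e : Quot (fun f g : {f : Q → Q // IsQuandleAut op f} => ConjugateAut op f.1 g.1) ≃
          Quot (fun f g : {f : Q → Q // IsQuandleAut op f} => ConstBiquandleIso op f.1 g.1),
      ∀ f, e (Quot.mk _ f) = Quot.mk _ f := by
  have key : ∀ f g : {f : Q → Q // IsQuandleAut op f},
      ConstBiquandleIso op f.1 g.1 ↔ ConjugateAut op f.1 g.1 := by
    rintro ⟨f, hf⟩ ⟨g, hg⟩
    constructor
    · rintro ⟨F, hFbij, hF1, hF2⟩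
      refine ⟨F, ⟨hFbij, fun x y => ?_⟩, funext fun x => hF2 x⟩
      exact hg.1.1 ((hF2 (op x y)).symm.trans (hF1 x y))
    · rintro ⟨h, hh, hcomm⟩
      refine ⟨h, hh.1, fun x y => ?_, fun x => congrFun hcomm x⟩
      have := congrFun hcomm (op x y)
      simp only [Function.comp] at this
      rw [this, hh.2]
    
  refine ⟨key, Quot.congrRight (fun f g => (key f g).symm) |>.symm |>.symm, fun f => rfl⟩
end

section
/- Let B be the biquandle defined by a biquandle structure {β_y : y ∈ X} on a quandle Q = (X, *). If F is a biquandle automorphism of B, then F is a quandle automorphism of Q and F ∘ β_y ∘ F^{-1} = β_{F(y)} for every y ∈ X; in particular, the automorphism group Aut(B) is a subgroup of the normalizer of the set {β_y : y ∈ X} in Aut(Q). -/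
/-- Let `B` be the biquandle defined by a biquandle structure `β` on the
quandle `Q = (X, op)` (operations `x ⊳ y = β_y(x * y)`, `x ⊲ y = β_y(x)`).
If `F` (with inverse `F⁻¹ = Finv`) is a biquandle automorphism of `B`, then
`F` is a quandle automorphism of `Q`, and `F ∘ β_y ∘ F⁻¹ = β_{F(y)}` for
every `y`; in particular conjugation by `F` maps the set `{β_y | y ∈ X}`
onto itself, so `Aut(B)` is a subgroup of the normalizer of `{β_y | y ∈ X}`
in `Aut(Q)`. -/
theorem aut_le_normalizer {X : Type*} (op : X → X → X) (β : X → X → X)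
    (hQ : IsQuandle op) (hβ : IsBiquandleStructure op β)
    (F Finv : X → X) (hFinv : Function.LeftInverse Finv F ∧ Function.RightInverse Finv F)
    (hF : Function.Bijective F)
    (hFu : ∀ x y, F (β y (op x y)) = β (F y) (op (F x) (F y)))
    (hFo : ∀ x y, F (β y x) = β (F y) (F x)) :
    (Function.Bijective F ∧ ∀ x y, F (op x y) = op (F x) (F y)) ∧
    (∀ y, F ∘ β y ∘ Finv = β (F y)) ∧
    (fun g : X → X => F ∘ g ∘ Finv) '' Set.range β = Set.range β := by
  obtain ⟨hL, hR⟩ := hFinv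
  have conj : ∀ y, F ∘ β y ∘ Finv = β (F y) := by
    intro y
    funext x
    simp only [Function.comp_apply]
    rw [hFo, hR x]
  refine ⟨⟨hF, ?_⟩, conj, ?_⟩
  · intro x y
    have h1 : F (β y (op x y)) = β (F y) (F (op x y)) := hFo _ _
    have h2 := hFu x y
    exact (hβ.beta_bij (F y)).1 (h1.symm.trans h2)
  · ext g
    constructor
    · rintro ⟨g, ⟨y, rfl⟩, rfl⟩
      exact ⟨F y, (conj y).symm⟩
    · rintro ⟨y, rfl⟩
      refine ⟨β (Finv y), ⟨Finv y, rfl⟩, ?_⟩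
      show F ∘ β (Finv y) ∘ Finv = β y
      rw [conj, hR y]
end

section
/- Let Q = (X, *) be a quandle, let f be a quandle automorphism of Q, and let X_f be the biquandle defined by the constant biquandle structure β_y = f for all y ∈ X. Then a map F : X → X is a biquandle automorphism of X_f if and only if F is a quandle automorphism of Q with F ∘ f = f ∘ F; consequently Aut(X_f) is isomorphic as a group to the centralizer of f in Aut(Q). -/
/-- The permutations of `X` preserving a binary operation `op`, as a subgroup
of `Equiv.Perm X`. For a quandle `(X, op)` this is its automorphism group
`Aut(X, op)`. -/
def opAutSubgroup {X : Type*} (op : X → X → X) : Subgroup (Equiv.Perm X) where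
  carrier := {F : Equiv.Perm X | ∀ x y, F (op x y) = op (F x) (F y)}
  one_mem' := fun _ _ => rfl
  mul_mem' := by
    intro a b ha hb x y
    simp only [Equiv.Perm.coe_mul, Function.comp_apply]
    rw [hb, ha]
  inv_mem' := by
    intro a ha x y
    have h := ha (a⁻¹ x) (a⁻¹ y)
    simp only [Equiv.Perm.inv_def, Equiv.apply_symm_apply] at h
    rw [← h, Equiv.Perm.inv_def, Equiv.symm_apply_apply]

/-- Let `f` be a quandle automorphism of the quandle `Q = (X, op)` and `X_f`
the biquandle given by the constant biquandle structure `β_y = f`, with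
operations `x ⊳ y = f(x * y)` and `x ⊲ y = f(x)`. Then `F : X → X` is a
biquandle automorphism of `X_f` iff `F` is a quandle automorphism of `Q`
commuting with `f`; consequently `Aut(X_f)` — the subgroup of `Equiv.Perm X`
of permutations preserving both biquandle operations — is isomorphic as a
group to the centralizer of `f` in `Aut(Q)`. -/
theorem aut_constant_eq_centralizer {X : Type*} (op : X → X → X) (hQ : IsQuandle op)
    (f : Equiv.Perm X) (hf : ∀ x y, f (op x y) = op (f x) (f y)) :
    (∀ F : X → X,
      (Function.Bijective F ∧ (∀ x y, F (f (op x y)) = f (op (F x) (F y))) ∧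
        (∀ x, F (f x) = f (F x))) ↔
      (Function.Bijective F ∧ (∀ x y, F (op x y) = op (F x) (F y)) ∧ F ∘ f = f ∘ F)) ∧
    Nonempty
      ((opAutSubgroup (fun x y => f (op x y)) ⊓ opAutSubgroup (fun x _ => f x) :
          Subgroup (Equiv.Perm X)) ≃*
        (opAutSubgroup op ⊓ Subgroup.centralizer {f} : Subgroup (Equiv.Perm X))) := by

  constructor
  · intro F
    constructor
    · rintro ⟨hb, h1, h2⟩
      refine ⟨hb, fun x y => f.injective ?_, funext h2⟩
      rw [← h2, h1]
    · rintro ⟨hb, h1, h2⟩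
      have h2' : ∀ x, F (f x) = f (F x) := fun x => congrFun h2 x
      exact ⟨hb, fun x y => by rw [h2', h1], h2'⟩
  · refine ⟨MulEquiv.subgroupCongr ?_⟩
    ext F
    simp only [Subgroup.mem_inf, Subgroup.mem_centralizer_iff, Set.mem_singleton_iff]
    constructor
    · rintro ⟨h1, h2⟩
      have h2' : ∀ x, F (f x) = f (F x) := fun x => h2 x x
      refine ⟨fun x y => f.injective ?_, ?_⟩
      · rw [← h2', h1]
      · intro g hg; subst hg
        ext x
        simp only [Equiv.Perm.coe_mul, Function.comp_apply]
        exact (h2' x).symm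
    · rintro ⟨h1, h2⟩
      have h2' : ∀ x, F (f x) = f (F x) := by
        intro x
        have := congrArg (fun g : Equiv.Perm X => g x) (h2 f rfl)
        simpa using this.symm
      exact ⟨fun x y => by rw [h2', h1], fun x _ => h2' x⟩
end

section
/- Let R be a commutative ring, let t and s be units of R, and let M be an R-module carrying the Alexander biquandle operations x ⊳ y = t·x + (s - t)·y and x ⊲ y = s·x, whose underlying quandle Q(M) has operation x * y = (s^{-1}t)·x + (1 - s^{-1}t)·y. Then a map F : M → M is a biquandle automorphism of the Alexander biquandle if and only if F is a quandle automorphism of Q(M) satisfying F(s·x) = s·F(x) for all x ∈ M; consequently Aut(M) is isomorphic as a group to the centralizer of the map x ↦ s·x in Aut(Q(M)). -/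
/-- Multiplication by a unit `s` as a permutation of the module `M`. -/
def smulPerm {R : Type*} [CommRing R] (M : Type*) [AddCommGroup M] [Module R M]
    (s : Rˣ) : Equiv.Perm M where
  toFun x := (s : R) • x
  invFun x := ((s⁻¹ : Rˣ) : R) • x
  left_inv x := by simp [smul_smul]
  right_inv x := by simp [smul_smul]

section AuxAlexander
variable {R : Type*} [CommRing R] {M : Type*} [AddCommGroup M] [Module R M] (t s : Rˣ)

lemma opQ_eq (x y : M) :
    ((s⁻¹ * t : Rˣ) : R) • x + (1 - ((s⁻¹ * t : Rˣ) : R)) • y =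
      ((s⁻¹ : Rˣ) : R) • ((t : R) • x + ((s : R) - (t : R)) • y) := by
  rw [smul_add, smul_smul, smul_smul]
  match_scalars
  · push_cast; ring
  · linear_combination (-1 : R) * s.inv_mul

lemma key_iff (F : M → M) (hs : ∀ x, F ((s : R) • x) = (s : R) • F x) :
    (∀ x y, F ((t : R) • x + ((s : R) - (t : R)) • y) =
      (t : R) • F x + ((s : R) - (t : R)) • F y) ↔
    (∀ x y, F (((s⁻¹ * t : Rˣ) : R) • x + (1 - ((s⁻¹ * t : Rˣ) : R)) • y) =
      ((s⁻¹ * t : Rˣ) : R) • F x + (1 - ((s⁻¹ * t : Rˣ) : R)) • F y) := by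
  have hs' : ∀ x, F (((s⁻¹ : Rˣ) : R) • x) = ((s⁻¹ : Rˣ) : R) • F x := by
    intro x
    have h := hs (((s⁻¹ : Rˣ) : R) • x)
    rw [smul_smul, s.mul_inv, one_smul] at h
    have h2 := congrArg (fun z => ((s⁻¹ : Rˣ) : R) • z) h
    simp only [smul_smul] at h2
    rw [s.inv_mul, one_smul] at h2
    exact h2.symm
  constructor
  · intro hB x y
    rw [opQ_eq, hs', hB, opQ_eq]
  · intro hQ x y
    have h := hQ x y
    rw [opQ_eq, hs'] at h
    have h2 := congrArg (fun z => (s : R) • z) h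
    simp only [smul_smul] at h2
    rw [s.mul_inv, one_smul] at h2
    rw [h2, smul_add, smul_smul, smul_smul]
    match_scalars
    · linear_combination (t : R) * s.mul_inv
    · linear_combination (-(t : R)) * s.mul_inv

end AuxAlexander

/-- Let `M` be the Alexander biquandle on an `R`-module (operations
`x ⊳ y = t·x + (s-t)·y`, `x ⊲ y = s·x`) with underlying Alexander quandle
`Q(M)` (operation `x * y = (s⁻¹t)·x + (1 - s⁻¹t)·y`). Then `F : M → M` is a
biquandle automorphism of `M` iff it is a quandle automorphism of `Q(M)`
with `F(s·x) = s·F(x)` for all `x`; consequently `Aut(M)` is isomorphic as a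
group to the centralizer of `x ↦ s·x` in `Aut(Q(M))`. -/
theorem alexander_biquandle_aut (R : Type*) [CommRing R] (M : Type*) [AddCommGroup M]
    [Module R M] (t s : Rˣ) :
    (∀ F : M → M,
      (Function.Bijective F ∧
        (∀ x y, F ((t : R) • x + ((s : R) - (t : R)) • y) =
          (t : R) • F x + ((s : R) - (t : R)) • F y) ∧
        (∀ x, F ((s : R) • x) = (s : R) • F x)) ↔
      (Function.Bijective F ∧
        (∀ x y, F (((s⁻¹ * t : Rˣ) : R) • x + (1 - ((s⁻¹ * t : Rˣ) : R)) • y) =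
          ((s⁻¹ * t : Rˣ) : R) • F x + (1 - ((s⁻¹ * t : Rˣ) : R)) • F y) ∧
        (∀ x, F ((s : R) • x) = (s : R) • F x))) ∧
    Nonempty
      ((opAutSubgroup (fun x y : M => (t : R) • x + ((s : R) - (t : R)) • y) ⊓
          opAutSubgroup (fun x _ : M => (s : R) • x) : Subgroup (Equiv.Perm M)) ≃*
        (opAutSubgroup
            (fun x y : M => ((s⁻¹ * t : Rˣ) : R) • x + (1 - ((s⁻¹ * t : Rˣ) : R)) • y) ⊓
          Subgroup.centralizer {smulPerm M s} : Subgroup (Equiv.Perm M))) := by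
  constructor
  · intro F
    constructor
    · rintro ⟨hb, hB, hs⟩
      exact ⟨hb, (key_iff t s F hs).mp hB, hs⟩
    · rintro ⟨hb, hQ, hs⟩
      exact ⟨hb, (key_iff t s F hs).mpr hQ, hs⟩
  · have hEq : (opAutSubgroup (fun x y : M => (t : R) • x + ((s : R) - (t : R)) • y) ⊓
          opAutSubgroup (fun x _ : M => (s : R) • x) : Subgroup (Equiv.Perm M)) =
        (opAutSubgroup
            (fun x y : M => ((s⁻¹ * t : Rˣ) : R) • x + (1 - ((s⁻¹ * t : Rˣ) : R)) • y) ⊓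
          Subgroup.centralizer {smulPerm M s}) := by
      ext F
      simp only [Subgroup.mem_inf]
      have hcent : F ∈ Subgroup.centralizer {smulPerm M s} ↔
          ∀ x, F ((s : R) • x) = (s : R) • F x := by
        rw [Subgroup.mem_centralizer_iff]
        constructor
        · intro h x
          have := congrArg (fun g => g x) (h (smulPerm M s) rfl)
          simpa [smulPerm, Equiv.Perm.mul_apply] using this.symm
        · intro h g hg
          rw [Set.mem_singleton_iff] at hg
          subst hg
          ext x
          simp [smulPerm, Equiv.Perm.mul_apply, h x]
      have hmemB : F ∈ opAutSubgroup (fun x y : M => (t : R) • x + ((s : R) - (t : R)) • y)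
          ↔ ∀ x y, F ((t : R) • x + ((s : R) - (t : R)) • y) =
            (t : R) • F x + ((s : R) - (t : R)) • F y := Iff.rfl
      have hmemS : F ∈ opAutSubgroup (fun x _ : M => (s : R) • x) ↔
          ∀ x, F ((s : R) • x) = (s : R) • F x := by
        constructor
        · exact fun h x => h x x
        · exact fun h x _ => h x
      have hmemQ : F ∈ opAutSubgroup
          (fun x y : M => ((s⁻¹ * t : Rˣ) : R) • x + (1 - ((s⁻¹ * t : Rˣ) : R)) • y) ↔
          ∀ x y, F (((s⁻¹ * t : Rˣ) : R) • x + (1 - ((s⁻¹ * t : Rˣ) : R)) • y) =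
            ((s⁻¹ * t : Rˣ) : R) • F x + (1 - ((s⁻¹ * t : Rˣ) : R)) • F y := Iff.rfl
      rw [hmemB, hmemS, hmemQ, hcent]
      constructor
      · rintro ⟨hB, hs⟩
        exact ⟨(key_iff t s F hs).mp hB, hs⟩
      · rintro ⟨hQ, hs⟩
        exact ⟨(key_iff t s F hs).mpr hQ, hs⟩
    exact ⟨MulEquiv.subgroupCongr hEq⟩
end

section
/- Let R be a commutative ring, let t and s be units of R, and let M and N be R-modules, each carrying the Alexander biquandle operations x ⊳ y = t·x + (s - t)·y and x ⊲ y = s·x. Then M and N are isomorphic as biquandles if and only if there exists a quandle isomorphism F : Q(M) → Q(N) between the underlying Alexander quandles such that F(s·x) = s·F(x) for every x ∈ M. -/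
private lemma alex_key (R : Type*) [CommRing R]
    (M : Type*) [AddCommGroup M] [Module R M] (t s : Rˣ) (x y : M) :
    (s : R) • (((s⁻¹ * t : Rˣ) : R) • x + (1 - ((s⁻¹ * t : Rˣ) : R)) • y) =
      (t : R) • x + ((s : R) - (t : R)) • y := by
  have h1 : (s : R) * ((s⁻¹ * t : Rˣ) : R) = (t : R) := by
    push_cast
    rw [← mul_assoc, Units.mul_inv, one_mul]
  rw [smul_add, smul_smul, smul_smul, h1, mul_sub, mul_one, h1]

/-- Let `M` and `N` be `R`-modules, each carrying the Alexander biquandle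
operations `x ⊳ y = t·x + (s-t)·y` and `x ⊲ y = s·x` for units `t, s` of the
commutative ring `R`. Then `M` and `N` are isomorphic as biquandles iff there
is a quandle isomorphism `F : Q(M) → Q(N)` between the underlying Alexander
quandles (with operation `x * y = (s⁻¹t)·x + (1 - s⁻¹t)·y`) such that
`F(s·x) = s·F(x)` for every `x ∈ M`. -/
theorem alexander_biquandle_iso_iff (R : Type*) [CommRing R]
    (M : Type*) [AddCommGroup M] [Module R M]
    (N : Type*) [AddCommGroup N] [Module R N] (t s : Rˣ) :
    (∃ F : M → N, Function.Bijective F ∧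
        (∀ x y, F ((t : R) • x + ((s : R) - (t : R)) • y) =
          (t : R) • F x + ((s : R) - (t : R)) • F y) ∧
        (∀ x, F ((s : R) • x) = (s : R) • F x)) ↔
    (∃ F : M → N, Function.Bijective F ∧
        (∀ x y, F (((s⁻¹ * t : Rˣ) : R) • x + (1 - ((s⁻¹ * t : Rˣ) : R)) • y) =
          ((s⁻¹ * t : Rˣ) : R) • F x + (1 - ((s⁻¹ * t : Rˣ) : R)) • F y) ∧
        (∀ x, F ((s : R) • x) = (s : R) • F x)) := by
  constructor
  · rintro ⟨F, hbij, hop, hs⟩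
    refine ⟨F, hbij, fun x y => ?_, hs⟩
    have h : (s : R) • F (((s⁻¹ * t : Rˣ) : R) • x + (1 - ((s⁻¹ * t : Rˣ) : R)) • y)
        = (s : R) • (((s⁻¹ * t : Rˣ) : R) • F x + (1 - ((s⁻¹ * t : Rˣ) : R)) • F y) := by
      rw [← hs, alex_key, hop, alex_key]
    have := congrArg (fun z => ((s⁻¹ : Rˣ) : R) • z) h
    simpa [smul_smul, ← Units.val_mul] using this
  · rintro ⟨F, hbij, hop, hs⟩
    refine ⟨F, hbij, fun x y => ?_, hs⟩
    rw [← alex_key R M t s, hs, hop, ← alex_key R N t s]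
end

section
/- Let n be a positive integer, let s be a unit of Z_n such that s + 1 is also a unit of Z_n, and let B_n be the dihedral biquandle on Z_n with operations i ⊳ j = (s+1)j - i and i ⊲ j = s·i. Then a map g : Z_n → Z_n is a biquandle automorphism of B_n if and only if there exist a unit a of Z_n and b ∈ Z_n with (s-1)b = 0 such that g(i) = a·i + b for all i; consequently Aut(B_n) is isomorphic as a group to the centralizer of the map i ↦ s·i in the affine group Aff(Z_n), which equals {f_{a,b} : a a unit of Z_n, (s-1)b = 0}. -/
/-- The affine group `Aff(ℤ/nℤ) = {i ↦ a·i + b | a ∈ (ℤ/nℤ)ˣ, b ∈ ℤ/nℤ}`,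
as a subgroup of `Equiv.Perm (ZMod n)`. -/
def affSubgroup (n : ℕ) : Subgroup (Equiv.Perm (ZMod n)) where
  carrier := {g | ∃ a : (ZMod n)ˣ, ∃ b : ZMod n, ∀ i, g i = (a : ZMod n) * i + b}
  one_mem' := ⟨1, 0, by simp⟩
  mul_mem' := by
    rintro g h ⟨a, b, hg⟩ ⟨c, d, hh⟩
    refine ⟨a * c, (a : ZMod n) * d + b, fun i => ?_⟩
    simp only [Equiv.Perm.coe_mul, Function.comp_apply, hh, hg, Units.val_mul]
    ring
  inv_mem' := by
    rintro g ⟨a, b, hg⟩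
    refine ⟨a⁻¹, -(((a⁻¹ : (ZMod n)ˣ) : ZMod n) * b), fun i => ?_⟩
    apply g.injective
    rw [Equiv.Perm.inv_def, Equiv.apply_symm_apply, hg]
    symm
    have h1 : (a : ZMod n) * ((a⁻¹ : (ZMod n)ˣ) : ZMod n) = 1 := Units.mul_inv a
    calc (a : ZMod n) * (((a⁻¹ : (ZMod n)ˣ) : ZMod n) * i +
            -(((a⁻¹ : (ZMod n)ˣ) : ZMod n) * b)) + b
        = ((a : ZMod n) * ((a⁻¹ : (ZMod n)ˣ) : ZMod n)) * i -
            ((a : ZMod n) * ((a⁻¹ : (ZMod n)ˣ) : ZMod n)) * b + b := by ring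
      _ = i := by rw [h1]; ring

/-- Multiplication by a unit `s`, as a permutation of `ℤ/nℤ`. -/
def mulPerm (n : ℕ) (s : (ZMod n)ˣ) : Equiv.Perm (ZMod n) where
  toFun i := (s : ZMod n) * i
  invFun i := ((s⁻¹ : (ZMod n)ˣ) : ZMod n) * i
  left_inv i := by simp [← mul_assoc, Units.inv_mul]
  right_inv i := by simp [← mul_assoc, Units.mul_inv]

lemma additive_mul (n : ℕ) [NeZero n] (h : ZMod n → ZMod n)
    (hadd : ∀ x y, h (x - y) = h x - h y) : ∀ x, h x = h 1 * x := by
  have h0 : h 0 = 0 := by have := hadd 0 0; simpa using this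
  have hadd' : ∀ x y, h (x + y) = h x + h y := by
    intro x y
    have := hadd (x + y) y
    simp at this
    linear_combination -this
  let f : ZMod n →+ ZMod n := ⟨⟨h, h0⟩, hadd'⟩
  intro x
  have hx : x = (x.val : ℕ) • (1 : ZMod n) := by
    simp [nsmul_eq_mul, ZMod.natCast_val, ZMod.cast_id]
  calc h x = f ((x.val : ℕ) • (1 : ZMod n)) := by rw [← hx]; rfl
    _ = (x.val : ℕ) • f 1 := by rw [map_nsmul]
    _ = h 1 * x := by
        show (x.val : ℕ) • h 1 = h 1 * x
        rw [nsmul_eq_mul, mul_comm]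
        congr 1
        simp [ZMod.natCast_val, ZMod.cast_id]

lemma key (n : ℕ) (hn : 0 < n) (s : (ZMod n)ˣ)
    (hs1 : IsUnit ((s : ZMod n) + 1)) (g : ZMod n → ZMod n) :
    (Function.Bijective g ∧
      (∀ i j, g (((s : ZMod n) + 1) * j - i) = ((s : ZMod n) + 1) * g j - g i) ∧
      (∀ i, g ((s : ZMod n) * i) = (s : ZMod n) * g i)) ↔
    (∃ a : (ZMod n)ˣ, ∃ b : ZMod n, ((s : ZMod n) - 1) * b = 0 ∧
      ∀ i, g i = (a : ZMod n) * i + b) := by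
  haveI : NeZero n := ⟨hn.ne'⟩
  obtain ⟨u, hu⟩ := hs1
  constructor
  · rintro ⟨hbij, h1, h2⟩
    have hsb : ((s : ZMod n) - 1) * g 0 = 0 := by
      have := h2 0
      simp only [mul_zero] at this
      linear_combination -this
    have hmain : ∀ x i, g (x - i) = g x + g 0 - g i := by
      intro x i
      have hx : ((s : ZMod n) + 1) * (((u⁻¹ : (ZMod n)ˣ) : ZMod n) * x) = x := by
        rw [← hu, ← mul_assoc]
        simp
      have e1 := h1 i (((u⁻¹ : (ZMod n)ˣ) : ZMod n) * x)
      have e2 := h1 0 (((u⁻¹ : (ZMod n)ˣ) : ZMod n) * x)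
      rw [hx] at e1 e2
      simp only [sub_zero] at e2
      rw [e1]
      linear_combination -e2
    have hlin := additive_mul n (fun x => g x - g 0) (by
      intro x y
      rw [hmain]
      ring)
    have hunit : IsUnit (g 1 - g 0) := by
      obtain ⟨c, hc⟩ := hbij.2 (1 + g 0)
      refine IsUnit.of_mul_eq_one c ?_
      have := hlin c
      rw [hc] at this
      linear_combination -this
    obtain ⟨a, ha⟩ := hunit
    refine ⟨a, g 0, hsb, fun i => ?_⟩
    have := hlin i
    linear_combination this - i * ha
  · rintro ⟨a, b, hsb, hg⟩
    have hsbb : (s : ZMod n) * b = b := by linear_combination hsb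
    refine ⟨⟨?_, ?_⟩, ?_, ?_⟩
    · intro x y hxy
      rw [hg, hg] at hxy
      have h2 : (a : ZMod n) * x = (a : ZMod n) * y := by linear_combination hxy
      have h3 := congrArg (fun z => ((a⁻¹ : (ZMod n)ˣ) : ZMod n) * z) h2
      simpa [← mul_assoc] using h3
    · intro y
      refine ⟨((a⁻¹ : (ZMod n)ˣ) : ZMod n) * (y - b), ?_⟩
      rw [hg, ← mul_assoc]
      simp
    · intro i j
      simp only [hg]
      linear_combination -hsbb
    · intro i
      simp only [hg]
      linear_combination -hsbb

/-- Let `n` be positive, `s` a unit of `ℤ/nℤ` with `s + 1` also a unit, and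
`B_n` the dihedral biquandle (`i ⊳ j = (s+1)j - i`, `i ⊲ j = s·i`). A map
`g : ℤ/nℤ → ℤ/nℤ` is a biquandle automorphism of `B_n` iff `g = f_{a,b}`
for some unit `a` and some `b` with `(s-1)b = 0`; consequently `Aut(B_n)` is
isomorphic as a group to the centralizer of `i ↦ s·i` in `Aff(ℤ/nℤ)`, which
equals `{f_{a,b} | a ∈ (ℤ/nℤ)ˣ, (s-1)b = 0}`. -/
theorem dihedral_biquandle_aut (n : ℕ) (hn : 0 < n) (s : (ZMod n)ˣ)
    (hs1 : IsUnit ((s : ZMod n) + 1)) :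
    (∀ g : ZMod n → ZMod n,
      (Function.Bijective g ∧
        (∀ i j, g (((s : ZMod n) + 1) * j - i) = ((s : ZMod n) + 1) * g j - g i) ∧
        (∀ i, g ((s : ZMod n) * i) = (s : ZMod n) * g i)) ↔
      (∃ a : (ZMod n)ˣ, ∃ b : ZMod n, ((s : ZMod n) - 1) * b = 0 ∧
        ∀ i, g i = (a : ZMod n) * i + b)) ∧
    Nonempty
      ((opAutSubgroup (fun i j : ZMod n => ((s : ZMod n) + 1) * j - i) ⊓
          opAutSubgroup (fun i _ : ZMod n => (s : ZMod n) * i) :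
            Subgroup (Equiv.Perm (ZMod n))) ≃*
        (affSubgroup n ⊓ Subgroup.centralizer {mulPerm n s} :
            Subgroup (Equiv.Perm (ZMod n)))) ∧
    ((affSubgroup n ⊓ Subgroup.centralizer {mulPerm n s} :
        Subgroup (Equiv.Perm (ZMod n))) : Set (Equiv.Perm (ZMod n))) =
      {g : Equiv.Perm (ZMod n) | ∃ a : (ZMod n)ˣ, ∃ b : ZMod n,
        ((s : ZMod n) - 1) * b = 0 ∧ ∀ i, g i = (a : ZMod n) * i + b} := by
  have hcent : ∀ F : Equiv.Perm (ZMod n),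
      F ∈ Subgroup.centralizer {mulPerm n s} ↔
        ∀ i, F ((s : ZMod n) * i) = (s : ZMod n) * F i := by
    intro F
    rw [Subgroup.mem_centralizer_iff]
    constructor
    · intro h i
      have h' := h (mulPerm n s) rfl
      have := (Equiv.ext_iff.mp h') i
      simpa [mulPerm, Equiv.Perm.mul_apply] using this.symm
    · intro h m hm
      rw [Set.mem_singleton_iff] at hm
      subst hm
      ext i
      simp only [Equiv.Perm.mul_apply]
      show (s : ZMod n) * F i = F ((s : ZMod n) * i)
      exact (h i).symm
  have haff : ∀ F : Equiv.Perm (ZMod n),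
      F ∈ affSubgroup n ↔
        ∃ a : (ZMod n)ˣ, ∃ b : ZMod n, ∀ i, F i = (a : ZMod n) * i + b := fun _ => Iff.rfl
  have hR : ∀ F : Equiv.Perm (ZMod n),
      F ∈ (affSubgroup n ⊓ Subgroup.centralizer {mulPerm n s}) ↔
        ∃ a : (ZMod n)ˣ, ∃ b : ZMod n, ((s : ZMod n) - 1) * b = 0 ∧
          ∀ i, F i = (a : ZMod n) * i + b := by
    intro F
    rw [Subgroup.mem_inf, haff, hcent]
    constructor
    · rintro ⟨⟨a, b, hg⟩, hc⟩
      refine ⟨a, b, ?_, hg⟩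
      have := hc 0
      rw [mul_zero, hg] at this
      linear_combination -this
    · rintro ⟨a, b, hsb, hg⟩
      refine ⟨⟨a, b, hg⟩, fun i => ?_⟩
      rw [hg, hg]
      linear_combination -hsb
  have hL : ∀ F : Equiv.Perm (ZMod n),
      F ∈ (opAutSubgroup (fun i j : ZMod n => ((s : ZMod n) + 1) * j - i) ⊓
          opAutSubgroup (fun i _ : ZMod n => (s : ZMod n) * i)) ↔
        ∃ a : (ZMod n)ˣ, ∃ b : ZMod n, ((s : ZMod n) - 1) * b = 0 ∧
          ∀ i, F i = (a : ZMod n) * i + b := by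
    intro F
    rw [Subgroup.mem_inf, ← key n hn s hs1 F]
    constructor
    · rintro ⟨h1, h2⟩
      exact ⟨F.bijective, h1, fun i => h2 i 0⟩
    · rintro ⟨_, h1, h2⟩
      exact ⟨h1, fun i _ => h2 i⟩
  have heq : (opAutSubgroup (fun i j : ZMod n => ((s : ZMod n) + 1) * j - i) ⊓
          opAutSubgroup (fun i _ : ZMod n => (s : ZMod n) * i)) =
      (affSubgroup n ⊓ Subgroup.centralizer {mulPerm n s}) :=
    Subgroup.ext fun F => (hL F).trans (hR F).symm
  exact ⟨fun g => key n hn s hs1 g, ⟨MulEquiv.subgroupCongr heq⟩,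
    Set.ext fun F => (hR F).trans Iff.rfl⟩
end

section
/- Let (Q, *) and (K, ∘) be quandles. Then the operations (x,a) ⊳ (y,b) = (x * y, a) and (x,a) ⊲ (y,b) = (x, a ∘ b) make the cartesian product Q × K a biquandle (the product biquandle). -/
/-- For quandles `(Q, *)` and `(K, ∘)`, the operations
`(x,a) ⊳ (y,b) = (x * y, a)` and `(x,a) ⊲ (y,b) = (x, a ∘ b)` make `Q × K`
a biquandle (the product biquandle). -/
theorem product_biquandle {Q K : Type*} (qop : Q → Q → Q) (kop : K → K → K)
    (hQ : IsQuandle qop) (hK : IsQuandle kop) :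
    IsBiquandle (fun p q : Q × K => (qop p.1 q.1, p.2))
      (fun p q : Q × K => (p.1, kop p.2 q.2)) := by
  let eQ : Q → Q ≃ Q := fun y => Equiv.ofBijective _ (hQ.right_bij y)
  let eK : K → K ≃ K := fun b => Equiv.ofBijective _ (hK.right_bij b)
  have heQ : ∀ y x, eQ y (x) = qop x y := fun _ _ => rfl
  have heK : ∀ b a, eK b (a) = kop a b := fun _ _ => rfl
  constructor
  · intro x
    simp [hQ.idem, hK.idem]
  · intro y
    exact ((eQ y.1).prodCongr (Equiv.refl K)).bijective
  · intro y
    exact ((Equiv.refl Q).prodCongr (eK y.2)).bijective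
  · rw [Function.bijective_iff_has_inverse]
    refine ⟨fun r => (((eQ r.1.1).symm r.2.1, r.2.2), (r.1.1, (eK r.2.2).symm r.1.2)), ?_, ?_⟩
    · rintro ⟨⟨x, a⟩, ⟨y, b⟩⟩
      simp only [← heQ, ← heK, Equiv.symm_apply_apply]
    · rintro ⟨⟨u, v⟩, ⟨w, s⟩⟩
      simp only [← heQ, ← heK, Equiv.apply_symm_apply]
  · intro x y z
    simp only [Prod.mk.injEq]
    exact ⟨(hQ.self_distrib x.1 z.1 y.1).symm, trivial⟩
  · intro x y z
    rfl
  · intro x y z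
    simp only [Prod.mk.injEq]
    exact ⟨trivial, (hK.self_distrib x.2 z.2 y.2).symm⟩
end
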